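/- For all integers M and t with 1 ≤ M < t, one has C(t,M)·(M/t)^M·((t−M)/t)^{t−M} ≥ 1/(e·√M). (This is the probability that a Binomial(t, M/t) random variable equals M.) -/

import Mathlib

open Real Stirling Nat

noncomputable def A (n : ℕ) : ℝ := Real.sqrt (2 * n) * ((n : ℝ) / Real.exp 1) ^ n

lemma A_pos {n : ℕ} (hn : 1 ≤ n) : 0 < A n := by
  have : (0:ℝ) < n := by exact_mod_cast hn
  unfold A; positivity

lemma stirling_eq {n : ℕ} (hn : 1 ≤ n) : (n ! : ℝ) = stirlingSeq n * A n := by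
  rw [stirlingSeq, A, div_mul_cancel₀]
  exact (A_pos hn).ne'

lemma sqrt_pi_le_stirlingSeq {n : ℕ} (hn : 1 ≤ n) : Real.sqrt π ≤ stirlingSeq n := by
  have h1 : Filter.Tendsto (stirlingSeq ∘ Nat.succ) Filter.atTop (nhds (Real.sqrt π)) :=
    tendsto_stirlingSeq_sqrt_pi.comp (Filter.tendsto_add_atTop_nat 1)
  have := stirlingSeq'_antitone.le_of_tendsto h1 (n - 1)
  simpa [Function.comp, Nat.succ_eq_add_one, Nat.sub_add_cancel hn] using this

lemma fact_lower {n : ℕ} (hn : 1 ≤ n) : Real.sqrt π * A n ≤ (n ! : ℝ) := by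
  rw [stirling_eq hn]
  exact mul_le_mul_of_nonneg_right (sqrt_pi_le_stirlingSeq hn) (A_pos hn).le

lemma fact_upper {k n : ℕ} (hk : 1 ≤ k) (hkn : k ≤ n) :
    (n ! : ℝ) ≤ stirlingSeq k * A n := by
  rw [stirling_eq (hk.trans hkn)]
  refine mul_le_mul_of_nonneg_right ?_ (A_pos (hk.trans hkn)).le
  have := stirlingSeq'_antitone (show k - 1 ≤ n - 1 from Nat.sub_le_sub_right hkn 1)
  simpa [Function.comp, Nat.succ_eq_add_one, Nat.sub_add_cancel hk,
    Nat.sub_add_cancel (hk.trans hkn)] using this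
lemma main_est (M q : ℕ) (hM : 1 ≤ M) (hq : 1 ≤ q) (cM cq : ℝ)
    (hcM : (M ! : ℝ) ≤ cM * A M) (hcq : (q ! : ℝ) ≤ cq * A q)
    (hlo : Real.sqrt π * A (M + q) ≤ ((M + q)! : ℝ))
    (hc : Real.sqrt 2 * cM * cq * Real.sqrt q ≤
      Real.exp 1 * Real.sqrt π * Real.sqrt ((M : ℝ) + q)) :
    1 / (Real.exp 1 * Real.sqrt M) ≤
      (((M + q).choose M : ℝ)) * ((M : ℝ) / ((M : ℝ) + q)) ^ M *
        ((q : ℝ) / ((M : ℝ) + q)) ^ q := by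
  set m : ℝ := (M : ℝ) with hm
  set Q : ℝ := (q : ℝ) with hQ
  set E : ℝ := Real.exp 1 with hE
  have hm0 : (0:ℝ) < m := by show (0:ℝ) < (M:ℝ); exact_mod_cast hM
  have hQ0 : (0:ℝ) < Q := by show (0:ℝ) < (q:ℝ); exact_mod_cast hq
  have hT0 : (0:ℝ) < m + Q := by linarith
  have hE0 : (0:ℝ) < E := Real.exp_pos 1
  have hAM := A_pos hM
  have hAq := A_pos hq
  have hcM0 : 0 < cM := by
    have h1 : (0:ℝ) < (M ! : ℝ) := by exact_mod_cast M.factorial_pos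
    nlinarith
  have hcq0 : 0 < cq := by
    have h1 : (0:ℝ) < (q ! : ℝ) := by exact_mod_cast q.factorial_pos
    nlinarith
  have hchoose : (((M + q).choose M : ℝ)) = ((M + q)! : ℝ) / ((M ! : ℝ) * (q ! : ℝ)) := by
    rw [Nat.cast_choose ℝ (Nat.le_add_right M q), Nat.add_sub_cancel_left]
  have hfacpos : (0:ℝ) < (M ! : ℝ) * (q ! : ℝ) := by
    have h1 : (0:ℝ) < (M ! : ℝ) := by exact_mod_cast M.factorial_pos
    have h2 : (0:ℝ) < (q ! : ℝ) := by exact_mod_cast q.factorial_pos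
    positivity
  have hdiv : Real.sqrt π * A (M + q) / (cM * A M * (cq * A q)) ≤
      ((M + q)! : ℝ) / ((M ! : ℝ) * (q ! : ℝ)) := by
    apply div_le_div₀ (by positivity) hlo hfacpos
    exact mul_le_mul hcM hcq (by positivity) (by positivity)
  rw [mul_assoc]
  have hpow : (0:ℝ) ≤ (m / (m + Q)) ^ M * (Q / (m + Q)) ^ q := by positivity
  have step1 : Real.sqrt π * A (M + q) / (cM * A M * (cq * A q)) *
      ((m / (m + Q)) ^ M * (Q / (m + Q)) ^ q) ≤
      (((M + q).choose M : ℝ)) * ((m / (m + Q)) ^ M * (Q / (m + Q)) ^ q) := by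
    rw [hchoose]
    exact mul_le_mul_of_nonneg_right hdiv hpow
  refine le_trans ?_ step1
  -- equality rewriting
  set x : ℝ := (m / E) ^ M with hx
  set y : ℝ := (Q / E) ^ q with hy
  have hx0 : (0:ℝ) < x := by rw [hx]; positivity
  have hy0 : (0:ℝ) < y := by rw [hy]; positivity
  have e1 : ((m + Q) / E) ^ M * (m / (m + Q)) ^ M = x := by
    rw [hx, ← mul_pow]; congr 1; field_simp
  have e2 : ((m + Q) / E) ^ q * (Q / (m + Q)) ^ q = y := by
    rw [hy, ← mul_pow]; congr 1; field_simp
  have Tcast : ((M + q : ℕ) : ℝ) = m + Q := by push_cast; ring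
  have hA1 : A (M + q) = Real.sqrt 2 * Real.sqrt (m + Q) *
      (((m + Q) / E) ^ M * ((m + Q) / E) ^ q) := by
    rw [A, Tcast, pow_add, Real.sqrt_mul (by norm_num : (0:ℝ) ≤ 2)]
  have hA2 : A M = Real.sqrt 2 * Real.sqrt m * x := by
    rw [A, hx, Real.sqrt_mul (by norm_num : (0:ℝ) ≤ 2)]
  have hA3 : A q = Real.sqrt 2 * Real.sqrt Q * y := by
    rw [A, hy, Real.sqrt_mul (by norm_num : (0:ℝ) ≤ 2)]
  have hkey : Real.sqrt π * A (M + q) / (cM * A M * (cq * A q)) *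
      ((m / (m + Q)) ^ M * (Q / (m + Q)) ^ q) =
      Real.sqrt π * Real.sqrt (m + Q) /
        (Real.sqrt 2 * cM * cq * (Real.sqrt m * Real.sqrt Q)) := by
    rw [hA1, hA2, hA3]
    have hL : Real.sqrt π * (Real.sqrt 2 * Real.sqrt (m + Q) *
        (((m + Q) / E) ^ M * ((m + Q) / E) ^ q)) /
        (cM * (Real.sqrt 2 * Real.sqrt m * x) * (cq * (Real.sqrt 2 * Real.sqrt Q * y))) *
        ((m / (m + Q)) ^ M * (Q / (m + Q)) ^ q) =
        Real.sqrt π * Real.sqrt 2 * Real.sqrt (m + Q) *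
          ((((m + Q) / E) ^ M * (m / (m + Q)) ^ M) * ((((m + Q) / E) ^ q * (Q / (m + Q)) ^ q))) /
        (cM * (Real.sqrt 2 * Real.sqrt m * x) * (cq * (Real.sqrt 2 * Real.sqrt Q * y))) := by
      ring
    rw [hL, e1, e2, div_eq_div_iff (by positivity) (by positivity)]
    ring
  rw [hkey, div_le_div_iff₀ (by positivity) (by positivity)]
  have h2 := mul_le_mul_of_nonneg_right hc (Real.sqrt_nonneg m)
  ring_nf at h2 ⊢
  linarith
lemma sqrt2_le : Real.sqrt 2 ≤ 1.415 := by
  rw [Real.sqrt_le_iff]; norm_num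

lemma le_sqrt3 : (1.732:ℝ) ≤ Real.sqrt 3 := by
  rw [Real.le_sqrt (by norm_num) (by norm_num)]; norm_num

lemma le_sqrtpi : (1.7724:ℝ) ≤ Real.sqrt π := by
  rw [Real.le_sqrt (by norm_num) (le_of_lt Real.pi_pos)]
  nlinarith [Real.pi_gt_d6]

lemma exp_le : Real.exp 1 ≤ 2.7183 := le_of_lt (Real.exp_one_lt_d9.trans (by norm_num))

lemma s2val : stirlingSeq 2 = Real.exp 1 ^ 2 / 4 := by
  have h4 : Real.sqrt (2 * (2:ℕ)) = 2 := by
    rw [show (2 * ((2:ℕ):ℝ)) = 2 ^ 2 by norm_num]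
    exact Real.sqrt_sq (by norm_num)
  rw [stirlingSeq, h4]
  have hE := Real.exp_pos 1
  norm_num [Nat.factorial]
  field_simp
  rw [Real.exp_one_pow]; norm_num; ring

lemma s3val : stirlingSeq 3 = 2 * Real.exp 1 ^ 3 / (9 * Real.sqrt 6) := by
  have h6 : Real.sqrt (2 * (3:ℕ)) = Real.sqrt 6 := by norm_num
  rw [stirlingSeq, h6]
  have hE := Real.exp_pos 1
  have h6' : Real.sqrt 6 ≠ 0 := by positivity
  norm_num [Nat.factorial]
  field_simp
  ring_nf
  rw [Real.exp_one_pow]; norm_num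

lemma sqrt6_eq : Real.sqrt 6 = Real.sqrt 2 * Real.sqrt 3 := by
  rw [← Real.sqrt_mul (by norm_num)]; norm_num

-- key numeric A : √2 * (E²/4) * (2E³/(9√6)) ≤ E √π
lemma numA : Real.sqrt 2 * (Real.exp 1 ^ 2 / 4) * (2 * Real.exp 1 ^ 3 / (9 * Real.sqrt 6)) ≤
    Real.exp 1 * Real.sqrt π := by
  set E := Real.exp 1 with hE
  have hE0 : 0 < E := Real.exp_pos 1
  have h2 : (0:ℝ) < Real.sqrt 2 := by positivity
  have h3 : (0:ℝ) < Real.sqrt 3 := by positivity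
  have hL : Real.sqrt 2 * (E ^ 2 / 4) * (2 * E ^ 3 / (9 * Real.sqrt 6)) =
      E ^ 5 / (18 * Real.sqrt 3) := by
    rw [sqrt6_eq]
    have h22 : Real.sqrt 2 * Real.sqrt 2 = 2 := Real.mul_self_sqrt (by norm_num)
    field_simp
    nlinarith [h22]
  rw [hL, div_le_iff₀ (by positivity)]
  have hE2 : E ^ 2 ≤ 7.39 := by nlinarith [exp_le, hE0]
  have hE4 : E ^ 4 ≤ 55.2 := by nlinarith [hE2, sq_nonneg E, hE0]
  have hprod : (55.2:ℝ) ≤ Real.sqrt π * (18 * Real.sqrt 3) := by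
    nlinarith [le_sqrt3, le_sqrtpi, h3, Real.sqrt_nonneg π]
  nlinarith [hE0, hE4, hprod, Real.sqrt_nonneg π, h3]

theorem stmt5 (M t : ℕ) (hM : 1 ≤ M) (hMt : M < t) :
    1 / (Real.exp 1 * Real.sqrt M) ≤
      (t.choose M : ℝ) * ((M : ℝ) / t) ^ M * (((t : ℝ) - M) / t) ^ (t - M) := by
  obtain ⟨q, hq1, rfl⟩ : ∃ q, 1 ≤ q ∧ t = M + q := ⟨t - M, by omega, by omega⟩
  have hsub : M + q - M = q := by omega
  have hcast : ((M + q : ℕ) : ℝ) = (M : ℝ) + q := by push_cast; ring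
  rw [hsub, hcast, show ((M : ℝ) + q - M) = (q : ℝ) by ring]
  set E := Real.exp 1 with hE
  have hE0 : 0 < E := Real.exp_pos 1
  rcases eq_or_lt_of_le hM with h1 | hM2
  · -- M = 1
    subst h1
    set Q : ℝ := (q : ℝ) with hQdef
    have hQ0 : (0:ℝ) < Q := by show (0:ℝ) < (q:ℝ); exact_mod_cast hq1
    have hQ1 : (1:ℝ) ≤ Q := by show (1:ℝ) ≤ (q:ℝ); exact_mod_cast hq1
    have hX0 : (0:ℝ) < ((1 + Q) / Q) ^ q := by positivity
    have hkey : ((1 + Q) / Q) ^ q ≤ E := by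
      have h1 : 1 / Q + 1 ≤ Real.exp (1 / Q) := Real.add_one_le_exp _
      have hbase : (1 + Q) / Q = 1 / Q + 1 := by field_simp
      have h2 : ((1 + Q) / Q) ^ q ≤ Real.exp (1 / Q) ^ q := by
        apply pow_le_pow_left₀ (by positivity) (by rw [hbase]; exact h1)
      have h3 : Real.exp (1 / Q) ^ q = E := by
        rw [← Real.exp_nat_mul, mul_one_div, div_self hQ0.ne']
      rw [h3] at h2; exact h2
    have hpow : 1 / E ≤ (Q / (1 + Q)) ^ q := by
      have : (Q / (1 + Q)) ^ q = 1 / ((1 + Q) / Q) ^ q := by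
        rw [one_div, ← inv_pow, inv_div]
      rw [this]
      exact one_div_le_one_div_of_le hX0 hkey
    have hchoose : ((1 + q).choose 1 : ℝ) = 1 + Q := by
      rw [Nat.choose_one_right]; push_cast; ring
    rw [hchoose]
    push_cast
    rw [Real.sqrt_one, mul_one, pow_one]
    have hcancel : (1 + Q) * ((1:ℝ) / (1 + Q)) = 1 := by field_simp
    calc 1 / E ≤ (Q / (1 + Q)) ^ q := hpow
      _ = (1 + Q) * ((1:ℝ) / (1 + Q)) * (Q / (1 + Q)) ^ q := by
          rw [hcancel, one_mul]
  · -- 2 ≤ M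
    have hM2' : 2 ≤ M := hM2
    have hcM : (M ! : ℝ) ≤ (E ^ 2 / 4) * A M := by
      have := fact_upper (by norm_num : 1 ≤ 2) hM2'
      rwa [s2val] at this
    have hlo := fact_lower (show 1 ≤ M + q by omega)
    have hm2 : (2:ℝ) ≤ (M:ℝ) := by exact_mod_cast hM2'
    have hQ1 : (1:ℝ) ≤ (q:ℝ) := by exact_mod_cast hq1
    rcases le_or_gt 3 q with h3q | hq2
    · -- q ≥ 3
      have hcq : (q ! : ℝ) ≤ (2 * E ^ 3 / (9 * Real.sqrt 6)) * A q := by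
        have := fact_upper (by norm_num : 1 ≤ 3) h3q
        rwa [s3val] at this
      apply main_est M q hM hq1 _ _ hcM hcq hlo
      have hQT : Real.sqrt (q : ℝ) ≤ Real.sqrt ((M:ℝ) + q) :=
        Real.sqrt_le_sqrt (by linarith)
      have h0 : (0:ℝ) ≤ Real.sqrt 2 * (E ^ 2 / 4) * (2 * E ^ 3 / (9 * Real.sqrt 6)) := by
        positivity
      calc Real.sqrt 2 * (E ^ 2 / 4) * (2 * E ^ 3 / (9 * Real.sqrt 6)) * Real.sqrt (q:ℝ)
          ≤ Real.sqrt 2 * (E ^ 2 / 4) * (2 * E ^ 3 / (9 * Real.sqrt 6)) *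
            Real.sqrt ((M:ℝ) + q) := mul_le_mul_of_nonneg_left hQT h0
        _ ≤ E * Real.sqrt π * Real.sqrt ((M:ℝ) + q) :=
            mul_le_mul_of_nonneg_right numA (Real.sqrt_nonneg _)
    · -- q ≤ 2
      have hq2' : q ≤ 2 := by omega
      have hcq : (q ! : ℝ) ≤ (E / Real.sqrt 2) * A q := by
        have := fact_upper le_rfl hq1
        rwa [stirlingSeq_one] at this
      apply main_est M q hM hq1 _ _ hcM hcq hlo
      have hQ2 : ((q:ℝ)) ≤ 2 := by exact_mod_cast hq2'
      have hT3 : (3:ℝ) ≤ (M:ℝ) + q := by linarith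
      have hsQ : Real.sqrt (q:ℝ) ≤ Real.sqrt 2 := Real.sqrt_le_sqrt hQ2
      have hsT : Real.sqrt 3 ≤ Real.sqrt ((M:ℝ) + q) := Real.sqrt_le_sqrt hT3
      have h22 : Real.sqrt 2 * Real.sqrt 2 = 2 := Real.mul_self_sqrt (by norm_num)
      have hs2 : (0:ℝ) < Real.sqrt 2 := by positivity
      have h0 : (0:ℝ) ≤ Real.sqrt 2 * (E ^ 2 / 4) * (E / Real.sqrt 2) := by positivity
      have hE2 : E ^ 2 ≤ 7.39 := by nlinarith [exp_le, hE0]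
      have hnumB : Real.sqrt 2 * (E ^ 2 / 4) * (E / Real.sqrt 2) * Real.sqrt 2 ≤
          E * Real.sqrt π * Real.sqrt 3 := by
        have hLHS : Real.sqrt 2 * (E ^ 2 / 4) * (E / Real.sqrt 2) * Real.sqrt 2 =
            Real.sqrt 2 * E ^ 3 / 4 := by
          field_simp
        rw [hLHS, div_le_iff₀ (by norm_num)]
        -- √2 E³ ≤ E √π √3 * 4
        have key : Real.sqrt 2 * E ^ 2 ≤ Real.sqrt π * Real.sqrt 3 * 4 := by
          have u1 : Real.sqrt 2 * E ^ 2 ≤ 1.415 * 7.39 :=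
            mul_le_mul sqrt2_le hE2 (sq_nonneg E) (by norm_num)
          have u2 : (1.7724:ℝ) * 1.732 ≤ Real.sqrt π * Real.sqrt 3 :=
            mul_le_mul le_sqrtpi le_sqrt3 (by norm_num) (Real.sqrt_nonneg π)
          nlinarith [u1, u2]
        have hmul := mul_le_mul_of_nonneg_left key hE0.le
        have h' : Real.sqrt 2 * E ^ 3 = E * (Real.sqrt 2 * E ^ 2) := by ring
        have h'' : E * Real.sqrt π * Real.sqrt 3 * 4 = E * (Real.sqrt π * Real.sqrt 3 * 4) := by
          ring
        rw [h', h'']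
        exact hmul
      calc Real.sqrt 2 * (E ^ 2 / 4) * (E / Real.sqrt 2) * Real.sqrt (q:ℝ)
          ≤ Real.sqrt 2 * (E ^ 2 / 4) * (E / Real.sqrt 2) * Real.sqrt 2 :=
            mul_le_mul_of_nonneg_left hsQ h0
        _ ≤ E * Real.sqrt π * Real.sqrt 3 := hnumB
        _ ≤ E * Real.sqrt π * Real.sqrt ((M:ℝ) + q) :=
            mul_le_mul_of_nonneg_left hsT (by positivity)
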